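/- Let π, π' be probability vectors in ℝ^N, and let F_n be the CDF of the Gaussian with mean μ_n and standard deviation σ > 0, the means μ_1, …, μ_N being pairwise distinct. If ∫_ℝ |Σ_{n=1}^N (π_n − π'_n) F_n(x)| dx = 0, then π = π', and consequently the vector L⁻ with entries min(π_i − π'_i, 0) is zero, so NGMG(L⁻) = −M L⁻ = 0. -/

import Mathlib

open MeasureTheory Matrix

/-- Gaussian density with mean `μ` and standard deviation `σ`. -/
noncomputable def gaussPDF (μ σ x : ℝ) : ℝ :=
  (1 / (σ * Real.sqrt (2 * Real.pi))) * Real.exp (-((x - μ) ^ 2) / (2 * σ ^ 2))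

/-- Gaussian CDF with mean `μ` and standard deviation `σ`. -/
noncomputable def gaussCDF (μ σ x : ℝ) : ℝ :=
  ∫ s in Set.Iic x, gaussPDF μ σ s

section aux

variable {σ : ℝ}

lemma gaussPDF_pos (μ : ℝ) (hσ : 0 < σ) (x : ℝ) : 0 < gaussPDF μ σ x := by
  unfold gaussPDF
  have := Real.pi_pos
  positivity

lemma continuous_gaussPDF (μ : ℝ) : Continuous (gaussPDF μ σ) := by
  unfold gaussPDF; fun_prop

lemma integrable_gaussPDF (μ : ℝ) (hσ : 0 < σ) : Integrable (gaussPDF μ σ) := by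
  have hb : (0:ℝ) < 1/(2*σ^2) := by positivity
  have h := (integrable_exp_neg_mul_sq hb).const_mul (1 / (σ * Real.sqrt (2 * Real.pi)))
  have h2 := h.comp_sub_right μ
  have he : (fun x : ℝ => (1 / (σ * Real.sqrt (2 * Real.pi))) *
      Real.exp (-(1/(2*σ^2)) * (x - μ) ^ 2)) = gaussPDF μ σ := by
    funext x
    unfold gaussPDF
    congr 1
    congr 1
    ring
  rwa [he] at h2

end aux

lemma gaussPDF_shift (μ : ℝ) (s : ℝ) : gaussPDF μ σ s = gaussPDF 0 σ (s - μ) := by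
  unfold gaussPDF
  norm_num

lemma gaussCDF_shift (μ : ℝ) (x : ℝ) : gaussCDF μ σ x = gaussCDF 0 σ (x - μ) := by
  unfold gaussCDF
  have hme : MeasurableEmbedding (fun s : ℝ => s + μ) :=
    (Homeomorph.addRight μ).measurableEmbedding
  have hmap : Measure.map (fun s : ℝ => s + μ) volume = volume :=
    map_add_right_eq_self volume μ
  calc ∫ s in Set.Iic x, gaussPDF μ σ s
      = ∫ s in Set.Iic x, gaussPDF 0 σ (s - μ) := by
        refine setIntegral_congr_fun measurableSet_Iic fun s _ => ?_
        exact gaussPDF_shift μ s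
    _ = ∫ s in Set.Iic x, gaussPDF 0 σ (s - μ) ∂(Measure.map (fun s : ℝ => s + μ) volume) := by
        rw [hmap]
    _ = ∫ t in (fun s : ℝ => s + μ) ⁻¹' Set.Iic x, gaussPDF 0 σ (t + μ - μ) :=
        hme.setIntegral_map _ _
    _ = ∫ t in Set.Iic (x - μ), gaussPDF 0 σ t := by
        congr 1
        · ext t; simp [le_sub_iff_add_le]
        · funext t; rw [add_sub_cancel_right]

lemma hasDerivAt_gaussCDF (μ : ℝ) (hσ : 0 < σ) (x : ℝ) :
    HasDerivAt (gaussCDF μ σ) (gaussPDF μ σ x) x := by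
  have hint : Integrable (gaussPDF μ σ) := integrable_gaussPDF μ hσ
  have h1 : HasDerivAt (fun u => ∫ t in (0:ℝ)..u, gaussPDF μ σ t) (gaussPDF μ σ x) x := by
    refine intervalIntegral.integral_hasDerivAt_right hint.intervalIntegrable ?_
      (continuous_gaussPDF μ).continuousAt
    exact (continuous_gaussPDF μ).stronglyMeasurable.stronglyMeasurableAtFilter
  have he : gaussCDF μ σ = fun u => gaussCDF μ σ 0 + ∫ t in (0:ℝ)..u, gaussPDF μ σ t := by
    funext u
    have h2 : ((∫ t in Set.Iic u, gaussPDF μ σ t) - ∫ t in Set.Iic (0:ℝ), gaussPDF μ σ t)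
        = ∫ t in (0:ℝ)..u, gaussPDF μ σ t :=
      intervalIntegral.integral_Iic_sub_Iic hint.integrableOn hint.integrableOn
    unfold gaussCDF
    linarith [h2]
  rw [he]
  exact h1.const_add _

lemma continuous_gaussCDF (μ : ℝ) (hσ : 0 < σ) : Continuous (gaussCDF μ σ) :=
  continuous_iff_continuousAt.2 fun x => (hasDerivAt_gaussCDF μ hσ x).continuousAt

set_option maxHeartbeats 1000000 in
lemma gaussCDF_diff (μ ν : ℝ) (hσ : 0 < σ) (a : ℝ) :
    gaussCDF μ σ a - gaussCDF ν σ a = ∫ s in (a - ν)..(a - μ), gaussPDF 0 σ s := by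
  rw [gaussCDF_shift μ, gaussCDF_shift ν]
  unfold gaussCDF
  have h2 : ((∫ t in Set.Iic (a - μ), gaussPDF 0 σ t) - ∫ t in Set.Iic (a - ν), gaussPDF 0 σ t)
      = ∫ t in (a - ν)..(a - μ), gaussPDF 0 σ t :=
    intervalIntegral.integral_Iic_sub_Iic (integrable_gaussPDF 0 hσ).integrableOn
      (integrable_gaussPDF 0 hσ).integrableOn
  exact h2

lemma gaussPDF_zero_anti (hσ : 0 < σ) {s t : ℝ} (h : t ^ 2 ≤ s ^ 2) :
    gaussPDF 0 σ s ≤ gaussPDF 0 σ t := by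
  unfold gaussPDF
  have hc : (0:ℝ) ≤ 1 / (σ * Real.sqrt (2 * Real.pi)) := by
    have := Real.pi_pos; positivity
  refine mul_le_mul_of_nonneg_left (Real.exp_le_exp.2 ?_) hc
  have h2 : (0:ℝ) < 2 * σ ^ 2 := by positivity
  rw [div_le_div_iff_of_pos_right h2]
  simp only [sub_zero, neg_le_neg_iff]
  exact h

lemma gaussPDF_le_const (hσ : 0 < σ) (s : ℝ) :
    gaussPDF 0 σ s ≤ 1 / (σ * Real.sqrt (2 * Real.pi)) := by
  unfold gaussPDF
  have hc : (0:ℝ) ≤ 1 / (σ * Real.sqrt (2 * Real.pi)) := by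
    have := Real.pi_pos; positivity
  nth_rewrite 2 [← mul_one (1 / (σ * Real.sqrt (2 * Real.pi)))]
  refine mul_le_mul_of_nonneg_left ?_ hc
  rw [Real.exp_le_one_iff]
  have h2 : (0:ℝ) < 2 * σ ^ 2 := by positivity
  apply div_nonpos_of_nonpos_of_nonneg
  · simp [sq_nonneg]
  · exact h2.le

lemma gaussCDF_diff_bound (μ ν : ℝ) (hσ : 0 < σ) (a : ℝ) :
    |gaussCDF μ σ a - gaussCDF ν σ a| ≤
      (gaussPDF 0 σ (a - μ) + gaussPDF 0 σ (a - ν) +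
        Set.indicator (Set.Icc (min μ ν) (max μ ν))
          (fun _ => 1 / (σ * Real.sqrt (2 * Real.pi))) a) * |μ - ν| := by
  have hpi := Real.pi_pos
  set C := gaussPDF 0 σ (a - μ) + gaussPDF 0 σ (a - ν) +
      Set.indicator (Set.Icc (min μ ν) (max μ ν))
        (fun _ => 1 / (σ * Real.sqrt (2 * Real.pi))) a with hC
  have hg1 : 0 < gaussPDF 0 σ (a - μ) := gaussPDF_pos 0 hσ _
  have hg2 : 0 < gaussPDF 0 σ (a - ν) := gaussPDF_pos 0 hσ _
  have hind : 0 ≤ Set.indicator (Set.Icc (min μ ν) (max μ ν))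
      (fun _ => 1 / (σ * Real.sqrt (2 * Real.pi))) a :=
    Set.indicator_nonneg (fun _ _ => by positivity) a
  have hmaxeq : max (a - ν) (a - μ) = a - min μ ν := by
    rw [max_sub_sub_left, min_comm]
  have hmineq : min (a - ν) (a - μ) = a - max μ ν := by
    rw [min_sub_sub_left, max_comm]
  have key : ∀ s ∈ Set.uIoc (a - ν) (a - μ), ‖gaussPDF 0 σ s‖ ≤ C := by
    intro s hs
    rw [Real.norm_eq_abs, abs_of_pos (gaussPDF_pos 0 hσ s)]
    have hlo : min (a - ν) (a - μ) < s := hs.1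
    have hhi : s ≤ max (a - ν) (a - μ) := hs.2
    rcases le_or_gt s 0 with h1 | h1
    · rcases le_or_gt (max (a - ν) (a - μ)) 0 with h2 | h2
      · have habs : |max (a - ν) (a - μ)| ≤ |s| := by
          rw [abs_of_nonpos h2, abs_of_nonpos h1]; linarith
        have hsq : (max (a - ν) (a - μ)) ^ 2 ≤ s ^ 2 := by
          rw [← sq_abs, ← sq_abs s]
          exact pow_le_pow_left₀ (abs_nonneg _) habs 2
        have hle := gaussPDF_zero_anti hσ hsq
        rcases max_cases (a - ν) (a - μ) with ⟨hm, _⟩ | ⟨hm, _⟩ <;> rw [hm] at hle <;>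
          simp only [hC] <;> linarith
      · have hmem : a ∈ Set.Icc (min μ ν) (max μ ν) := by
          constructor
          · rw [hmaxeq] at h2; linarith
          · rw [hmineq] at hlo; linarith
        have hle := gaussPDF_le_const hσ s
        simp only [hC, Set.indicator_of_mem hmem]
        linarith
    · rcases le_or_gt 0 (min (a - ν) (a - μ)) with h2 | h2
      · have hsq : (min (a - ν) (a - μ)) ^ 2 ≤ s ^ 2 :=
          pow_le_pow_left₀ h2 hlo.le 2
        have hle := gaussPDF_zero_anti hσ hsq
        rcases min_cases (a - ν) (a - μ) with ⟨hm, _⟩ | ⟨hm, _⟩ <;> rw [hm] at hle <;>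
          simp only [hC] <;> linarith
      · have hmem : a ∈ Set.Icc (min μ ν) (max μ ν) := by
          constructor
          · rw [hmaxeq] at hhi; linarith
          · rw [hmineq] at h2; linarith
        have hle := gaussPDF_le_const hσ s
        simp only [hC, Set.indicator_of_mem hmem]
        linarith
  rw [gaussCDF_diff μ ν hσ a]
  calc |∫ s in (a - ν)..(a - μ), gaussPDF 0 σ s|
      = ‖∫ s in (a - ν)..(a - μ), gaussPDF 0 σ s‖ := (Real.norm_eq_abs _).symm
    _ ≤ C * |a - μ - (a - ν)| := intervalIntegral.norm_integral_le_of_norm_le_const key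
    _ = C * |μ - ν| := by rw [show a - μ - (a - ν) = -(μ - ν) by ring, abs_neg]

lemma integrable_gaussCDF_diff (μ ν : ℝ) (hσ : 0 < σ) :
    Integrable (fun a => gaussCDF μ σ a - gaussCDF ν σ a) := by
  have hpi := Real.pi_pos
  have hbd : Integrable (fun a => (gaussPDF 0 σ (a - μ) + gaussPDF 0 σ (a - ν) +
      Set.indicator (Set.Icc (min μ ν) (max μ ν))
        (fun _ => 1 / (σ * Real.sqrt (2 * Real.pi))) a) * |μ - ν|) := by
    refine Integrable.mul_const ?_ _
    refine Integrable.add (Integrable.add ?_ ?_) ?_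
    · exact (integrable_gaussPDF 0 hσ).comp_sub_right μ
    · exact (integrable_gaussPDF 0 hσ).comp_sub_right ν
    · rw [integrable_indicator_iff measurableSet_Icc]
      exact integrableOn_const measure_Icc_lt_top.ne
  refine hbd.mono' ?_ (Filter.Eventually.of_forall fun a => ?_)
  · exact (((continuous_gaussCDF μ hσ).sub (continuous_gaussCDF ν hσ))).aestronglyMeasurable
  · rw [Real.norm_eq_abs]
    exact gaussCDF_diff_bound μ ν hσ a

lemma gauss_lin_indep {N : ℕ} (hσ : 0 < σ) (μ : Fin N → ℝ)
    (hμ : Function.Injective μ) (c : Fin N → ℝ)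
    (h : ∀ x : ℝ, ∑ n, c n * gaussPDF (μ n) σ x = 0) : c = 0 := by
  have hpi := Real.pi_pos
  by_contra hc
  obtain ⟨k0, hk0⟩ : ∃ n, c n ≠ 0 := by
    by_contra h'; push_neg at h'; exact hc (funext fun n => h' n)
  set S : Finset (Fin N) := Finset.univ.filter (fun n => c n ≠ 0) with hS
  have hSne : S.Nonempty := ⟨k0, by simp [hS, hk0]⟩
  obtain ⟨k, hkS, hk⟩ := S.exists_max_image μ hSne
  have hck : c k ≠ 0 := by
    have := (Finset.mem_filter.1 hkS).2
    exact this
  have hconv : ∀ n ∈ Finset.univ, Filter.Tendsto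
      (fun x => c n * (gaussPDF (μ n) σ x / gaussPDF (μ k) σ x)) Filter.atTop
      (nhds (if n = k then c k else 0)) := by
    intro n _
    rcases eq_or_ne n k with rfl | hnk
    · simp only [if_pos rfl]
      have he : (fun x => c n * (gaussPDF (μ n) σ x / gaussPDF (μ n) σ x)) = fun _ => c n := by
        funext x; rw [div_self (ne_of_gt (gaussPDF_pos _ hσ x)), mul_one]
      rw [he]; exact tendsto_const_nhds
    · rw [if_neg hnk]
      rcases eq_or_ne (c n) 0 with hcn | hcn
      · simpa [hcn] using (tendsto_const_nhds :
          Filter.Tendsto (fun _ : ℝ => (0:ℝ)) Filter.atTop (nhds 0))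
      · have hnS : n ∈ S := Finset.mem_filter.2 ⟨Finset.mem_univ n, hcn⟩
        have hlt : μ n < μ k := lt_of_le_of_ne (hk n hnS) (fun hh => hnk (hμ hh))
        have hrat : ∀ x : ℝ, gaussPDF (μ n) σ x / gaussPDF (μ k) σ x =
            Real.exp ((μ n - μ k) / σ ^ 2 * x + (μ k ^ 2 - μ n ^ 2) / (2 * σ ^ 2)) := by
          intro x
          unfold gaussPDF
          rw [mul_div_mul_left _ _
            (by positivity : (1 : ℝ) / (σ * Real.sqrt (2 * Real.pi)) ≠ 0)]
          rw [← Real.exp_sub]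
          congr 1
          field_simp
          ring
        have hE : Filter.Tendsto (fun x : ℝ => (μ n - μ k) / σ ^ 2 * x +
            (μ k ^ 2 - μ n ^ 2) / (2 * σ ^ 2)) Filter.atTop Filter.atBot := by
          apply Filter.tendsto_atBot_add_const_right
          exact Filter.tendsto_id.const_mul_atTop_of_neg
            (div_neg_of_neg_of_pos (sub_neg.2 hlt) (by positivity))
        have htend : Filter.Tendsto (fun x => gaussPDF (μ n) σ x / gaussPDF (μ k) σ x)
            Filter.atTop (nhds 0) := by
          simp_rw [hrat]
          exact Real.tendsto_exp_atBot.comp hE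
        simpa using htend.const_mul (c n)
  have hsum := tendsto_finset_sum Finset.univ hconv
  have hval : ∑ n, (if n = k then c k else 0) = c k := by simp
  rw [hval] at hsum
  have hzero : (fun x => ∑ n, c n * (gaussPDF (μ n) σ x / gaussPDF (μ k) σ x))
      = fun _ : ℝ => (0:ℝ) := by
    funext x
    have hd : ∑ n, c n * (gaussPDF (μ n) σ x / gaussPDF (μ k) σ x)
        = (∑ n, c n * gaussPDF (μ n) σ x) / gaussPDF (μ k) σ x := by
      rw [Finset.sum_div]; exact Finset.sum_congr rfl fun n _ => (mul_div_assoc _ _ _).symm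
    rw [hd, h x, zero_div]
  rw [hzero] at hsum
  exact hck (tendsto_nhds_unique hsum tendsto_const_nhds)

/-- if the 1-Wasserstein distance `∫_ℝ |∑ (πₙ - π'ₙ) Fₙ(x)| dx` vanishes,
then `π = π'`, hence the negative part `L⁻` is zero and `NGMG(L⁻) = -M L⁻ = 0`. -/
theorem stmt_8 {N : ℕ} (hN : 1 ≤ N) (σ : ℝ) (hσ : 0 < σ)
    (μ : Fin N → ℝ) (hμ : Function.Injective μ)
    (π π' : Fin N → ℝ)
    (hπ : ∀ n, 0 ≤ π n) (hπs : ∑ n, π n = 1)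
    (hπ' : ∀ n, 0 ≤ π' n) (hπ's : ∑ n, π' n = 1)
    (M : Matrix (Fin N) (Fin N) ℝ)
    (hM : ∀ j i, M j i = if i = j then 0 else gaussPDF (μ i) σ (μ j))
    (Lm : Fin N → ℝ) (hLm : ∀ i, Lm i = min (π i - π' i) 0)
    (h0 : ∫ x : ℝ, |∑ n, (π n - π' n) * gaussCDF (μ n) σ x| = 0) :
    π = π' ∧ Lm = 0 ∧ -(M *ᵥ Lm) = 0 := by
  have hcs : ∑ n, (π n - π' n) = 0 := by
    rw [Finset.sum_sub_distrib, hπs, hπ's, sub_self]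
  set f : ℝ → ℝ := fun x => ∑ n, (π n - π' n) * gaussCDF (μ n) σ x with hf
  let n0 : Fin N := ⟨0, hN⟩
  have hfeq : f = fun x => ∑ n, (π n - π' n) *
      (gaussCDF (μ n) σ x - gaussCDF (μ n0) σ x) := by
    funext x
    simp only [hf, mul_sub, Finset.sum_sub_distrib, ← Finset.sum_mul, hcs, zero_mul, sub_zero]
  have hfi : Integrable f := by
    rw [hfeq]
    exact integrable_finset_sum _ fun n _ =>
      ((integrable_gaussCDF_diff (μ n) (μ n0) hσ).const_mul (π n - π' n))
  have hcont : Continuous f :=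
    continuous_finset_sum _ fun n _ => continuous_const.mul (continuous_gaussCDF (μ n) hσ)
  have hae : (fun x => |f x|) =ᵐ[volume] (fun _ => 0) :=
    (integral_eq_zero_iff_of_nonneg (fun x => abs_nonneg _) hfi.abs).1 h0
  have habs : (fun x => |f x|) = fun _ => 0 :=
    (Continuous.ae_eq_iff_eq volume hcont.abs continuous_const).1 hae
  have hf0 : ∀ x, f x = 0 := fun x => abs_eq_zero.1 (congrFun habs x)
  have hderiv : ∀ x : ℝ, ∑ n, (π n - π' n) * gaussPDF (μ n) σ x = 0 := by
    intro x
    have h1 : HasDerivAt f (∑ n, (π n - π' n) * gaussPDF (μ n) σ x) x := by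
      apply HasDerivAt.fun_sum
      intro n _
      exact (hasDerivAt_gaussCDF (μ n) hσ x).const_mul (π n - π' n)
    have h2 : f = fun _ : ℝ => (0:ℝ) := funext hf0
    rw [h2] at h1
    exact h1.unique (hasDerivAt_const x 0)
  have hc0 : (fun n => π n - π' n) = 0 := gauss_lin_indep hσ μ hμ _ hderiv
  have hππ' : π = π' := by
    funext n
    have := congrFun hc0 n
    simpa [sub_eq_zero] using this
  have hLm0 : Lm = 0 := by
    funext i
    rw [hLm i, hππ']
    simp
  refine ⟨hππ', hLm0, ?_⟩
  rw [hLm0, Matrix.mulVec_zero, neg_zero]
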